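/- Let 0 < q1 < q2 < 1, c > 0, ω > 0, b = ρ1ω^{q2} − cρ2ω^{−q1} and a* = cρ1ω^{−q2} − ρ2ω^{q1}, where ρ1 = sin(q1π/2)/sin((q2−q1)π/2), ρ2 = sin(q2π/2)/sin((q2−q1)π/2). Let P(ω) = (q1+q2)(iω)^{q1+q2−1} + a*·q2·(iω)^{q2−1} + b·q1·(iω)^{q1−1} (principal branches). Then Re(i^{q2}·conj(P(ω))) = ω^{q1−1}·sin((q2−q1)π/2)·(q2ρ1ω^{q2} + c·q1ρ2ω^{−q1}) > 0. -/

import Mathlib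

open Real Complex

lemma log_I_mul_ofReal {ω : ℝ} (hω : 0 < ω) :
    Complex.log (Complex.I * ω) = (Real.log ω : ℂ) + ((π / 2 : ℝ) : ℂ) * Complex.I := by
  have h : Complex.I * (ω : ℂ) = Complex.exp ((Real.log ω : ℂ) + ((π / 2 : ℝ) : ℂ) * Complex.I) := by
    rw [Complex.exp_add, Complex.exp_mul_I, ← Complex.ofReal_exp, Real.exp_log hω,
      ← Complex.ofReal_cos, ← Complex.ofReal_sin, Real.cos_pi_div_two, Real.sin_pi_div_two]
    push_cast
    ring
  rw [h, Complex.log_exp]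
  · simp
    linarith [Real.pi_pos]
  · simp
    linarith [Real.pi_pos]

lemma pw {ω : ℝ} (hω : 0 < ω) (s : ℝ) :
    (Complex.I * (ω : ℂ)) ^ (s : ℂ)
      = ((ω ^ s : ℝ) : ℂ) * Complex.exp (((s * (π / 2) : ℝ) : ℂ) * Complex.I) := by
  have hne : Complex.I * (ω : ℂ) ≠ 0 :=
    mul_ne_zero Complex.I_ne_zero (Complex.ofReal_ne_zero.2 hω.ne')
  rw [Complex.cpow_def_of_ne_zero hne, log_I_mul_ofReal hω, add_mul, Complex.exp_add]
  congr 1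
  · rw [show ((Real.log ω : ℂ)) * (s : ℂ) = ((Real.log ω * s : ℝ) : ℂ) by push_cast; ring,
      ← Complex.ofReal_exp, Real.rpow_def_of_pos hω]
  · congr 1
    push_cast
    ring

lemma term_re (a c θ : ℝ) :
    (Complex.exp (((a : ℝ) : ℂ) * Complex.I) *
        (starRingEnd ℂ) ((c : ℂ) * Complex.exp (((θ : ℝ) : ℂ) * Complex.I))).re
      = c * Real.cos (a - θ) := by
  rw [map_mul, Complex.conj_ofReal, ← Complex.exp_conj]
  have : (starRingEnd ℂ) (((θ : ℝ) : ℂ) * Complex.I) = ((-θ : ℝ) : ℂ) * Complex.I := by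
    rw [map_mul, Complex.conj_ofReal, Complex.conj_I]
    push_cast
    ring
  rw [this, mul_comm ((c : ℂ)) _, ← mul_assoc, ← Complex.exp_add]
  have h2 : ((a : ℝ) : ℂ) * Complex.I + ((-θ : ℝ) : ℂ) * Complex.I = ((a - θ : ℝ) : ℂ) * Complex.I := by
    push_cast; ring
  rw [h2, mul_comm, Complex.re_ofReal_mul, Complex.exp_ofReal_mul_I_re]

theorem stmt14 (q1 q2 c ω : ℝ) (h1 : 0 < q1) (h2 : q1 < q2) (h3 : q2 < 1)
    (hc : 0 < c) (hω : 0 < ω)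
    (ρ1 ρ2 b astar : ℝ)
    (hρ1 : ρ1 = Real.sin (q1 * π / 2) / Real.sin ((q2 - q1) * π / 2))
    (hρ2 : ρ2 = Real.sin (q2 * π / 2) / Real.sin ((q2 - q1) * π / 2))
    (hb : b = ρ1 * ω ^ q2 - c * ρ2 * ω ^ (-q1))
    (hastar : astar = c * ρ1 * ω ^ (-q2) - ρ2 * ω ^ q1)
    (P : ℂ)
    (hP : P = ((q1 : ℂ) + q2) * (Complex.I * ω) ^ ((q1 : ℂ) + q2 - 1)
        + (astar : ℂ) * q2 * (Complex.I * ω) ^ ((q2 : ℂ) - 1)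
        + (b : ℂ) * q1 * (Complex.I * ω) ^ ((q1 : ℂ) - 1)) :
    (Complex.I ^ (q2 : ℂ) * (starRingEnd ℂ) P).re
        = ω ^ (q1 - 1) * Real.sin ((q2 - q1) * π / 2) * (q2 * ρ1 * ω ^ q2 + c * q1 * ρ2 * ω ^ (-q1))
      ∧ 0 < (Complex.I ^ (q2 : ℂ) * (starRingEnd ℂ) P).re := by
  have pi2 := Real.pi_pos
  -- rewrite I ^ q2
  have hI : Complex.I ^ (q2 : ℂ) = Complex.exp (((q2 * (π / 2) : ℝ) : ℂ) * Complex.I) := by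
    rw [Complex.cpow_def_of_ne_zero Complex.I_ne_zero, Complex.log_I]
    congr 1
    push_cast
    ring
  -- rewrite the three powers
  have e1 : ((q1 : ℂ) + q2 - 1) = (((q1 + q2 - 1 : ℝ)) : ℂ) := by push_cast; ring
  have e2 : ((q2 : ℂ) - 1) = (((q2 - 1 : ℝ)) : ℂ) := by push_cast; ring
  have e3 : ((q1 : ℂ) - 1) = (((q1 - 1 : ℝ)) : ℂ) := by push_cast; ring
  have hPP : P = (((q1 + q2) * ω ^ (q1 + q2 - 1) : ℝ) : ℂ) *
        Complex.exp ((((q1 + q2 - 1) * (π / 2) : ℝ) : ℂ) * Complex.I)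
      + ((astar * q2 * ω ^ (q2 - 1) : ℝ) : ℂ) *
        Complex.exp ((((q2 - 1) * (π / 2) : ℝ) : ℂ) * Complex.I)
      + ((b * q1 * ω ^ (q1 - 1) : ℝ) : ℂ) *
        Complex.exp ((((q1 - 1) * (π / 2) : ℝ) : ℂ) * Complex.I) := by
    rw [hP, e1, e2, e3, pw hω, pw hω, pw hω]
    push_cast
    ring
  have hre : (Complex.I ^ (q2 : ℂ) * (starRingEnd ℂ) P).re
      = (q1 + q2) * ω ^ (q1 + q2 - 1) * Real.cos (q2 * (π / 2) - (q1 + q2 - 1) * (π / 2))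
        + astar * q2 * ω ^ (q2 - 1) * Real.cos (q2 * (π / 2) - (q2 - 1) * (π / 2))
        + b * q1 * ω ^ (q1 - 1) * Real.cos (q2 * (π / 2) - (q1 - 1) * (π / 2)) := by
    rw [hPP, hI, map_add, map_add, mul_add, mul_add, Complex.add_re, Complex.add_re,
      term_re, term_re, term_re]
  -- simplify the cosines
  have c1 : Real.cos (q2 * (π / 2) - (q1 + q2 - 1) * (π / 2)) = Real.sin (q1 * π / 2) := by
    have : q2 * (π / 2) - (q1 + q2 - 1) * (π / 2) = π / 2 - q1 * π / 2 := by ring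
    rw [this, Real.cos_pi_div_two_sub]
  have c2 : Real.cos (q2 * (π / 2) - (q2 - 1) * (π / 2)) = 0 := by
    have : q2 * (π / 2) - (q2 - 1) * (π / 2) = π / 2 := by ring
    rw [this, Real.cos_pi_div_two]
  have c3 : Real.cos (q2 * (π / 2) - (q1 - 1) * (π / 2)) = -Real.sin ((q2 - q1) * π / 2) := by
    have : q2 * (π / 2) - (q1 - 1) * (π / 2) = π / 2 + (q2 - q1) * π / 2 := by ring
    rw [this, Real.cos_add, Real.cos_pi_div_two, Real.sin_pi_div_two]
    ring
  rw [c1, c2, c3] at hre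
  -- positivity of sines
  have hs : 0 < Real.sin ((q2 - q1) * π / 2) := by
    apply Real.sin_pos_of_pos_of_lt_pi <;> nlinarith
  have hs1 : 0 < Real.sin (q1 * π / 2) := by
    apply Real.sin_pos_of_pos_of_lt_pi <;> nlinarith
  have hs2 : 0 < Real.sin (q2 * π / 2) := by
    apply Real.sin_pos_of_pos_of_lt_pi <;> nlinarith
  have hsin1 : Real.sin (q1 * π / 2) = ρ1 * Real.sin ((q2 - q1) * π / 2) := by
    rw [hρ1, div_mul_eq_mul_div, eq_div_iff hs.ne']
  have hsplit : ω ^ (q1 + q2 - 1) = ω ^ (q1 - 1) * ω ^ q2 := by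
    rw [← Real.rpow_add hω]; ring_nf
  have key : (Complex.I ^ (q2 : ℂ) * (starRingEnd ℂ) P).re
      = ω ^ (q1 - 1) * Real.sin ((q2 - q1) * π / 2) *
          (q2 * ρ1 * ω ^ q2 + c * q1 * ρ2 * ω ^ (-q1)) := by
    rw [hre, hsin1, hb, hsplit]
    ring
  refine ⟨key, ?_⟩
  rw [key]
  have hρ1p : 0 < ρ1 := by rw [hρ1]; positivity
  have hρ2p : 0 < ρ2 := by rw [hρ2]; positivity
  refine mul_pos (mul_pos (Real.rpow_pos_of_pos hω _) hs) (add_pos ?_ ?_)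
  · exact mul_pos (mul_pos (h1.trans h2) hρ1p) (Real.rpow_pos_of_pos hω _)
  · exact mul_pos (mul_pos (mul_pos hc h1) hρ2p) (Real.rpow_pos_of_pos hω _)
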